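/- Vinberg identity: for all multilinear maps h ∈ C^m, f ∈ C^n, g ∈ C^p, the associator of the total composition satisfies (h, f, g) = (−1)^{(n−1)(p−1)} (h, g, f); that is, the total composition makes C a graded right Vinberg (pre-Lie) algebra. -/

import Mathlib

open Finset

section OperadPrelude

variable {K : Type*} [CommRing K] {L : Type*} [AddCommGroup L] [Module K L]

/-- `C K L n`: the `K`-module of `n`-multilinear maps `L^n → L`
(the degree-`n` component of the endomorphism operad of `L`). -/
abbrev C (K L : Type*) [CommRing K] [AddCommGroup L] [Module K L] (n : ℕ) :=
  MultilinearMap K (fun _ : Fin n => L) L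

/-- The extension of an `n`-ary multilinear operation to sequences `ℕ → L`:
it evaluates `f` on the first `n` entries of the sequence.  Two `n`-ary
multilinear operations are equal iff their extensions are equal, so operadic
identities are stated as identities between extensions. -/
def ex {n : ℕ} (f : C K L n) : (ℕ → L) → L := fun x => f fun j => x j.1

/-- The sign `(-1)^e` for an integer exponent `e`. -/
def sgn (e : ℤ) : ℤ := (((-1 : ℤˣ) ^ e : ℤˣ) : ℤ)

/-- Partial composition `f ∘ᵢ g`, where `n = deg g`:
`(f ∘ᵢ g)(x₀, x₁, …) = (-1)^{i(n-1)} f(x₀,…,x_{i-1}, g(x_i,…,x_{i+n-1}), x_{i+n},…)`. -/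
def pc (n i : ℕ) (f g : (ℕ → L) → L) : (ℕ → L) → L :=
  fun x => sgn ((i : ℤ) * ((n : ℤ) - 1)) •
    f fun j => if j < i then x j else if j = i then g (fun k => x (i + k)) else x (j + n - 1)

/-- Total composition `f ∘ g := Σ_{i=0}^{m-1} f ∘ᵢ g`, where `m = deg f`, `n = deg g`. -/
def tc (m n : ℕ) (f g : (ℕ → L) → L) : (ℕ → L) → L :=
  fun x => ∑ i ∈ Finset.range m, pc n i f g x

/-- The associator `(h, f, g) := (h ∘ f) ∘ g − h ∘ (f ∘ g)` of the total composition,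
where `m = deg h`, `n = deg f`, `p = deg g`. -/
def assoc (m n p : ℕ) (h f g : (ℕ → L) → L) : (ℕ → L) → L :=
  fun x => tc (m + n - 1) p (tc m n h f) g x - tc m (n + p - 1) h (tc n p f g) x

/-- The brace `⟨h|fg⟩ := Σ (h ∘ᵢ f) ∘ⱼ g`, summed over `0 ≤ i ≤ m-2`,
`i + n ≤ j ≤ m + n - 2`, where `m = deg h`, `n = deg f`, `p = deg g`. -/
def br2 (m n p : ℕ) (h f g : (ℕ → L) → L) : (ℕ → L) → L :=
  fun x => ∑ i ∈ Finset.range (m - 1), ∑ j ∈ Finset.Icc (i + n) (m + n - 2),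
    pc p j (pc n i h f) g x

/-- The triple brace `⟨h|fgb⟩ := Σ ((h ∘ᵢ f) ∘ⱼ g) ∘ₖ b`, summed over `0 ≤ i ≤ m-3`,
`i + n ≤ j ≤ m + n - 3`, `j + p ≤ k ≤ m + n + p - 3`, where
`m = deg h`, `n = deg f`, `p = deg g`, `q = deg b`. -/
def br3 (m n p q : ℕ) (h f g b : (ℕ → L) → L) : (ℕ → L) → L :=
  fun x => ∑ i ∈ Finset.range (m - 2), ∑ j ∈ Finset.Icc (i + n) (m + n - 3),
    ∑ k ∈ Finset.Icc (j + p) (m + n + p - 3),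
      pc q k (pc p j (pc n i h f) g) b x

/-- The Gerstenhaber bracket `[f,g] := f ∘ g − (-1)^{|f||g|} g ∘ f`,
where `m = deg f`, `n = deg g`, `|f| = m - 1`, `|g| = n - 1`. -/
def gb (m n : ℕ) (f g : (ℕ → L) → L) : (ℕ → L) → L :=
  fun x => tc m n f g x - sgn (((m : ℤ) - 1) * ((n : ℤ) - 1)) • tc n m g f x

/-- The cup product `f ⌣ g := (-1)^{deg f} (μ ∘₀ f) ∘_{deg f} g`,
where `m = deg f`, `n = deg g`. -/
def cup (μ : C K L 2) (m n : ℕ) (f g : (ℕ → L) → L) : (ℕ → L) → L :=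
  fun x => sgn (m : ℤ) • pc n m (pc m 0 (ex μ) f) g x

/-- The coboundary operator `δ_μ f := −[f, μ]`, where `m = deg f`. -/
def delta (μ : C K L 2) (m : ℕ) (f : (ℕ → L) → L) : (ℕ → L) → L :=
  fun x => - gb m 2 f (ex μ) x


set_option linter.unusedSectionVars false

lemma sgn_add' (a b : ℤ) : sgn (a + b) = sgn a * sgn b := by
  simp [sgn, zpow_add]

lemma sgn_two_mul' (k : ℤ) : sgn (2 * k) = 1 := by
  have h2 : ((-1 : ℤˣ) ^ (2:ℤ)) = 1 := by decide
  rw [sgn, zpow_mul, h2, one_zpow]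
  rfl

lemma sgn_smul_smul (a b : ℤ) (v : L) : sgn a • sgn b • v = sgn (a + b) • v := by
  rw [smul_smul, sgn_add']

lemma sgn_congr' {a b : ℤ} (k : ℤ) (h : a = b + 2 * k) : sgn a = sgn b := by
  subst h; rw [sgn_add', sgn_two_mul', mul_one]

def ins (n i : ℕ) (g : (ℕ → L) → L) (x : ℕ → L) : ℕ → L :=
  fun j => if j < i then x j else if j = i then g (fun k => x (i + k)) else x (j + n - 1)

lemma pc_def' (n i : ℕ) (f g : (ℕ → L) → L) (x : ℕ → L) :
    pc n i f g x = sgn ((i : ℤ) * ((n : ℤ) - 1)) • f (ins n i g x) := rfl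

lemma ins_lt {i j : ℕ} (n : ℕ) (h : j < i) (g : (ℕ → L) → L) (x : ℕ → L) :
    ins n i g x j = x j := if_pos h

lemma ins_self (n i : ℕ) (g : (ℕ → L) → L) (x : ℕ → L) :
    ins n i g x i = g (fun k => x (i + k)) := by
  unfold ins; rw [if_neg (lt_irrefl i), if_pos rfl]

lemma ins_gt {i j : ℕ} (n : ℕ) (h : i < j) (g : (ℕ → L) → L) (x : ℕ → L) :
    ins n i g x j = x (j + n - 1) := by
  unfold ins; rw [if_neg (by omega), if_neg (by omega)]

lemma ex_congr' {n : ℕ} (f : C K L n) {x y : ℕ → L} (hxy : ∀ k, k < n → x k = y k) :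
    ex f x = ex f y := by
  unfold ex; congr 1; funext j; exact hxy j j.2

lemma ins_eq_update (n i : ℕ) (g : (ℕ → L) → L) (x : ℕ → L) :
    ins n i g x = Function.update (fun j => if j < i then x j else x (j + n - 1)) i
      (g fun k => x (i + k)) := by
  funext j
  rw [Function.update_apply]
  rcases lt_trichotomy j i with h | rfl | h
  · rw [ins_lt n h, if_neg (by omega), if_pos h]
  · rw [ins_self, if_pos rfl]
  · rw [ins_gt n h, if_neg (by omega), if_neg (by omega)]

lemma ex_update' {m : ℕ} (h : C K L m) (y : ℕ → L) {i : ℕ} (hi : i < m) (v : L) :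
    ex h (Function.update y i v) = h (Function.update (fun j : Fin m => y j) ⟨i, hi⟩ v) := by
  unfold ex; congr 1; funext j
  simp only [Function.update_apply, Fin.ext_iff]

lemma ex_update_zsmul {m : ℕ} (h : C K L m) (y : ℕ → L) {i : ℕ} (hi : i < m) (c : ℤ) (v : L) :
    ex h (Function.update y i (c • v)) = c • ex h (Function.update y i v) := by
  rw [ex_update' h y hi, ex_update' h y hi, ← Int.cast_smul_eq_zsmul K c v,
    h.map_update_smul, Int.cast_smul_eq_zsmul K]

lemma ex_update_sum {m : ℕ} (h : C K L m) (y : ℕ → L) {i : ℕ} (hi : i < m) {α : Type*}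
    (s : Finset α) (v : α → L) :
    ex h (Function.update y i (∑ a ∈ s, v a)) = ∑ a ∈ s, ex h (Function.update y i (v a)) := by
  rw [ex_update' h y hi, MultilinearMap.map_update_sum]
  exact Finset.sum_congr rfl fun a _ => (ex_update' h y hi (v a)).symm

lemma ins_nested (n p i l : ℕ) (hl : l < n) (f g : (ℕ → L) → L) (x : ℕ → L) :
    ins n i f (ins p (i + l) g x) = ins (n + p - 1) i (fun y => f (ins p l g y)) x := by
  funext t
  rcases lt_trichotomy t i with ht | rfl | ht
  · rw [ins_lt n ht, ins_lt p (by omega), ins_lt (n + p - 1) ht]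
  · rw [ins_self, ins_self]
    congr 1
    funext k
    rcases lt_trichotomy k l with hk | rfl | hk
    · rw [ins_lt p (by omega), ins_lt p hk]
    · rw [ins_self, ins_self]
      congr 1
      funext t
      exact congrArg x (by omega)
    · rw [ins_gt p (by omega), ins_gt p hk]
      exact congrArg x (by omega)
  · rw [ins_gt n ht, ins_gt p (by omega), ins_gt (n + p - 1) ht]
    exact congrArg x (by omega)

lemma ins_disjoint {n : ℕ} (p i j : ℕ) (hij : i + n ≤ j) (f : C K L n)
    (g : (ℕ → L) → L) (x : ℕ → L) :
    ins n i (ex f) (ins p j g x) = ins p (j - n + 1) g (ins n i (ex f) x) := by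
  have hJi : i < j - n + 1 := by omega
  funext t
  rcases lt_trichotomy t i with ht | rfl | ht
  · rw [ins_lt n ht, ins_lt p (by omega), ins_lt p (by omega), ins_lt n ht]
  · rw [ins_self, ins_lt p hJi, ins_self]
    exact ex_congr' f fun k hk => ins_lt p (by omega) g x
  · rw [ins_gt n ht]
    rcases lt_trichotomy t (j - n + 1) with ht2 | rfl | ht2
    · rw [ins_lt p (by omega), ins_lt p ht2, ins_gt n ht]
    · rw [show j - n + 1 + n - 1 = j from by omega, ins_self, ins_self]
      congr 1
      funext k
      rw [ins_gt n (by omega)]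
      exact congrArg x (by omega)
    · rw [ins_gt p (by omega), ins_gt p ht2, ins_gt n (by omega)]
      exact congrArg x (by omega)

lemma pc_tc_left (p j m n : ℕ) (H F G : (ℕ → L) → L) (x : ℕ → L) :
    pc p j (tc m n H F) G x = ∑ i ∈ Finset.range m, pc p j (pc n i H F) G x := by
  simp only [pc_def', tc, Finset.smul_sum]

lemma pc_tc_right {m : ℕ} (h : C K L m) (N n p : ℕ) {i : ℕ} (hi : i < m)
    (F G : (ℕ → L) → L) (x : ℕ → L) :
    pc N i (ex h) (tc n p F G) x = ∑ l ∈ Finset.range n, pc N i (ex h) (pc p l F G) x := by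
  simp only [pc_def', ins_eq_update, tc]
  rw [ex_update_sum h _ hi, Finset.smul_sum]

lemma pc_nested {m n p : ℕ} (h : C K L m) {i l : ℕ} (hi : i < m) (hl : l < n)
    (F G : (ℕ → L) → L) (x : ℕ → L) :
    pc (n + p - 1) i (ex h) (pc p l F G) x = pc p (i + l) (pc n i (ex h) F) G x := by
  have hFG : pc p l F G = fun y => sgn ((l : ℤ) * ((p : ℤ) - 1)) • F (ins p l G y) := by
    funext y; exact pc_def' p l F G y
  have e1 : Function.update (fun j => if j < i then x j else x (j + (n + p - 1) - 1)) i
      (F (ins p l G fun k => x (i + k))) = ins (n + p - 1) i (fun y => F (ins p l G y)) x :=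
    (ins_eq_update (n + p - 1) i (fun y => F (ins p l G y)) x).symm
  rw [pc_def', hFG, ins_eq_update, ex_update_zsmul h _ hi, e1,
    ← ins_nested n p i l hl F G x, pc_def', pc_def', sgn_smul_smul, sgn_smul_smul]
  congr 1
  apply sgn_congr' 0
  have hcast : ((n + p - 1 : ℕ) : ℤ) = (n : ℤ) + (p : ℤ) - 1 := by omega
  push_cast [hcast]
  ring

lemma pc_disjoint_swap {n : ℕ} (p : ℕ) (f : C K L n) (H G : (ℕ → L) → L) {i j : ℕ}
    (hij : i + n ≤ j) (x : ℕ → L) :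
    pc p j (pc n i H (ex f)) G x
      = sgn (((n : ℤ) - 1) * ((p : ℤ) - 1)) • pc n i (pc p (j - n + 1) H G) (ex f) x := by
  have hin : pc n i H (ex f) = fun y => sgn ((i : ℤ) * ((n : ℤ) - 1)) • H (ins n i (ex f) y) := by
    funext y; exact pc_def' n i H (ex f) y
  have hout : pc p (j - n + 1) H G
      = fun y => sgn (((j - n + 1 : ℕ) : ℤ) * ((p : ℤ) - 1)) • H (ins p (j - n + 1) G y) := by
    funext y; exact pc_def' p (j - n + 1) H G y
  rw [pc_def', hin, smul_comm, pc_def', hout, smul_comm _ (sgn ((i : ℤ) * ((n : ℤ) - 1))),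
    ins_disjoint p i j hij f G x]
  rw [sgn_smul_smul, sgn_smul_smul, sgn_smul_smul]
  congr 1
  apply sgn_congr' 0
  have hcast : ((j - n + 1 : ℕ) : ℤ) = (j : ℤ) - (n : ℤ) + 1 := by omega
  push_cast [hcast]
  ring

lemma sum_split (m n : ℕ) (T : ℕ → ℕ → L) :
    ((∑ j ∈ Finset.range (m + n - 1), ∑ i ∈ Finset.range m, T i j)
        - ∑ i ∈ Finset.range m, ∑ l ∈ Finset.range n, T i (i + l))
      = ∑ i ∈ Finset.range m, ((∑ j ∈ Finset.range i, T i j)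
          + ∑ j ∈ Finset.Ico (i + n) (m + n - 1), T i j) := by
  rw [Finset.sum_comm, ← Finset.sum_sub_distrib]
  apply Finset.sum_congr rfl
  intro i hi
  rw [Finset.mem_range] at hi
  have h1 : ∑ l ∈ Finset.range n, T i (i + l) = ∑ j ∈ Finset.Ico i (i + n), T i j := by
    rw [Finset.sum_Ico_eq_sum_range]
    simp
  have h2 : ∑ j ∈ Finset.range (m + n - 1), T i j
      = ((∑ j ∈ Finset.range i, T i j) + ∑ j ∈ Finset.Ico i (i + n), T i j)
        + ∑ j ∈ Finset.Ico (i + n) (m + n - 1), T i j := by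
    rw [Finset.range_eq_Ico, ← Finset.sum_Ico_consecutive _ (by omega : 0 ≤ i + n)
      (by omega : i + n ≤ m + n - 1), ← Finset.sum_Ico_consecutive _ (by omega : 0 ≤ i)
      (by omega : i ≤ i + n)]
    rw [Finset.range_eq_Ico]
  rw [h1, h2]
  abel

lemma tri (m : ℕ) (W : ℕ → ℕ → L) :
    ∑ i ∈ Finset.range m, ∑ j ∈ Finset.range i, W i j
      = ∑ a ∈ Finset.range m, ∑ b ∈ Finset.Ico (a + 1) m, W b a := by
  rw [Finset.sum_sigma', Finset.sum_sigma']
  refine Finset.sum_nbij' (fun x => ⟨x.2, x.1⟩) (fun x => ⟨x.2, x.1⟩) ?_ ?_ ?_ ?_ ?_ <;>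
    intro a ha <;>
    simp only [Finset.mem_sigma, Finset.mem_range, Finset.mem_Ico] at * <;>
    first
      | rfl
      | omega

lemma shiftIco (V : ℕ → L) (i m k : ℕ) :
    ∑ j ∈ Finset.Ico (i + 1) m, V (j + k - 1) = ∑ j ∈ Finset.Ico (i + k) (m + k - 1), V j := by
  refine Finset.sum_nbij' (fun j => j + k - 1) (fun j => j - k + 1) ?_ ?_ ?_ ?_ ?_ <;>
    intro a ha <;>
    simp only [Finset.mem_Ico] at * <;>
    first
      | rfl
      | omega

lemma assoc_expand {m n p : ℕ} (h : C K L m) (F G : (ℕ → L) → L) (x : ℕ → L) :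
    assoc m n p (ex h) F G x
      = ∑ i ∈ Finset.range m, ((∑ j ∈ Finset.range i, pc p j (pc n i (ex h) F) G x)
          + ∑ j ∈ Finset.Ico (i + n) (m + n - 1), pc p j (pc n i (ex h) F) G x) := by
  have s1 : tc (m + n - 1) p (tc m n (ex h) F) G x
      = ∑ j ∈ Finset.range (m + n - 1), ∑ i ∈ Finset.range m, pc p j (pc n i (ex h) F) G x := by
    show (∑ j ∈ Finset.range (m + n - 1), pc p j (tc m n (ex h) F) G x) = _
    exact Finset.sum_congr rfl fun j _ => pc_tc_left p j m n (ex h) F G x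
  have s2 : tc m (n + p - 1) (ex h) (tc n p F G) x
      = ∑ i ∈ Finset.range m, ∑ l ∈ Finset.range n, pc p (i + l) (pc n i (ex h) F) G x := by
    show (∑ i ∈ Finset.range m, pc (n + p - 1) i (ex h) (tc n p F G) x) = _
    refine Finset.sum_congr rfl fun i hi => ?_
    rw [Finset.mem_range] at hi
    rw [pc_tc_right h (n + p - 1) n p hi F G x]
    refine Finset.sum_congr rfl fun l hl => ?_
    rw [Finset.mem_range] at hl
    exact pc_nested h hi hl F G x
  show tc (m + n - 1) p (tc m n (ex h) F) G x - tc m (n + p - 1) (ex h) (tc n p F G) x = _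
  rw [s1, s2, sum_split]

lemma sgn_smul_sgn_smul (a : ℤ) (v : L) : sgn a • sgn a • v = v := by
  rw [sgn_smul_smul, show a + a = 2 * a from by ring, sgn_two_mul', one_smul]

lemma pc_disjoint_swap' {n p : ℕ} (f : C K L n) (g : C K L p) (H : (ℕ → L) → L) {i j : ℕ}
    (hij : j < i) (x : ℕ → L) :
    pc p j (pc n i H (ex f)) (ex g) x
      = sgn (((n : ℤ) - 1) * ((p : ℤ) - 1))
          • pc n (i + p - 1) (pc p j H (ex g)) (ex f) x := by
  have key := pc_disjoint_swap (n := p) n g H (ex f) (i := j) (j := i + p - 1) (by omega) x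
  rw [show i + p - 1 - p + 1 = i from by omega,
    show ((p : ℤ) - 1) * ((n : ℤ) - 1) = ((n : ℤ) - 1) * ((p : ℤ) - 1) from by ring] at key
  rw [key]
  exact (sgn_smul_sgn_smul _ _).symm


/-- the Vinberg identity `(h,f,g) = (-1)^{(n-1)(p-1)} (h,g,f)`
for the associator of the total composition. -/
theorem vinberg_identity
    {m n p : ℕ} (h : C K L m) (f : C K L n) (g : C K L p) :
    assoc m n p (ex h) (ex f) (ex g)
      = sgn (((n : ℤ) - 1) * ((p : ℤ) - 1)) • assoc m p n (ex h) (ex g) (ex f) := by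

  funext x
  rw [Pi.smul_apply, assoc_expand h (ex f) (ex g) x, assoc_expand h (ex g) (ex f) x]
  have e1 : ∀ i ∈ Finset.range m,
      ((∑ j ∈ Finset.range i, pc p j (pc n i (ex h) (ex f)) (ex g) x)
        + ∑ j ∈ Finset.Ico (i + n) (m + n - 1), pc p j (pc n i (ex h) (ex f)) (ex g) x)
      = sgn (((n : ℤ) - 1) * ((p : ℤ) - 1)) •
        ((∑ j ∈ Finset.range i, pc n (i + p - 1) (pc p j (ex h) (ex g)) (ex f) x)
          + ∑ j ∈ Finset.Ico (i + n) (m + n - 1),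
              pc n i (pc p (j - n + 1) (ex h) (ex g)) (ex f) x) := by
    intro i _
    rw [smul_add, Finset.smul_sum, Finset.smul_sum]
    congr 1
    · exact Finset.sum_congr rfl fun j hj =>
        pc_disjoint_swap' f g (ex h) (Finset.mem_range.mp hj) x
    · exact Finset.sum_congr rfl fun j hj =>
        pc_disjoint_swap p f (ex h) (ex g) (Finset.mem_Ico.mp hj).1 x
  rw [Finset.sum_congr rfl e1, ← Finset.smul_sum]
  congr 1
  rw [Finset.sum_add_distrib, Finset.sum_add_distrib, add_comm]
  congr 1
  · refine Eq.trans (Finset.sum_congr rfl fun i _ => ?_)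
      (tri m (fun a b => pc n b (pc p a (ex h) (ex g)) (ex f) x)).symm
    rw [← shiftIco (fun j => pc n i (pc p (j - n + 1) (ex h) (ex g)) (ex f) x) i m n]
    refine Finset.sum_congr rfl fun j hj => ?_
    have hj' := Finset.mem_Ico.mp hj
    have hjj : j + n - 1 - n + 1 = j := by omega
    rw [hjj]
  · rw [tri m (fun a b => pc n (a + p - 1) (pc p b (ex h) (ex g)) (ex f) x)]
    refine Finset.sum_congr rfl fun a _ => ?_
    rw [← shiftIco (fun j => pc n j (pc p a (ex h) (ex g)) (ex f) x) a m p]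


end OperadPrelude
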